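/- The single-pass reverse edge-stream algorithm that initializes τ[v] := fin[v] for all v and, scanning temporal edges (u,v,t,λ) in nonincreasing order of starting time t, updates τ[u] := max(τ[u], t) whenever t ≥ t_α and t+λ ≤ τ[v], computes for each vertex u the multiple-target latest-departure path time from u within the window [t_α, t_ω]. -/

import Mathlib

open scoped Classical

structure TEdge (V : Type) where
  src : V
  dst : V
  t : ℝ
  len : ℝ

variable {V : Type}

/-- Consecutive compatibility of temporal edges. -/
def compat (e f : TEdge V) : Prop := e.dst = f.src ∧ e.t + e.len ≤ f.t

/-- A temporal path from `x` to `y`: a nonempty list of temporal edges of `E`,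
starting at `x`, ending at `y`, consecutively compatible. -/
def IsPath (E : Set (TEdge V)) (x y : V) (p : List (TEdge V)) : Prop :=
  p ≠ [] ∧ (∀ e ∈ p, e ∈ E) ∧ p.head?.map TEdge.src = some x ∧
    p.getLast?.map TEdge.dst = some y ∧ List.Chain' compat p

/-- Starting time of a temporal path. -/
def startT (p : List (TEdge V)) : ℝ := ((p.head?).map TEdge.t).getD 0

/-- Ending (arrival) time of a temporal path. -/
def endT (p : List (TEdge V)) : ℝ := ((p.getLast?).map (fun e => e.t + e.len)).getD 0

/-- Distance (sum of traversal times) of a temporal path. -/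
def distT (p : List (TEdge V)) : ℝ := (p.map TEdge.len).sum

/-- One step of the reverse edge-stream latest-departure algorithm: scanning
edge `e`, update `τ e.src` to `max (τ e.src) e.t` whenever `tα ≤ e.t` and
`e.t + e.len ≤ τ e.dst`. -/
noncomputable def stepLD (tα : ℝ) (τ : V → EReal) (e : TEdge V) : V → EReal :=
  fun v =>
    if v = e.src ∧ tα ≤ e.t ∧ ((e.t + e.len : ℝ) : EReal) ≤ τ e.dst then
      max (τ v) ((e.t : ℝ) : EReal)
    else τ v

/-- The multiple-target latest-departure time from `u`: the maximum over
`fin u` (staying at `u`) and the starting times of temporal paths from `u`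
whose edges start no earlier than `tα` and which end at some vertex `v` no
later than `fin v`. -/
noncomputable def mtldpTime (E : Set (TEdge V)) (fin : V → EReal) (tα : ℝ) (u : V) : EReal :=
  sSup {s : EReal | s = fin u ∨ ∃ p v, IsPath E u v p ∧ (∀ e ∈ p, tα ≤ e.t) ∧
    ((endT p : ℝ) : EReal) ≤ fin v ∧ s = ((startT p : ℝ) : EReal)}

private lemma isPath_mono {E F : Set (TEdge V)} (h : E ⊆ F) {x y : V} {p : List (TEdge V)}
    (hp : IsPath E x y p) : IsPath F x y p :=
  ⟨hp.1, fun e he => h (hp.2.1 e he), hp.2.2.1, hp.2.2.2.1, hp.2.2.2.2⟩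

private lemma no_middle {e : TEdge V} {p : List (TEdge V)}
    (hchain : List.Chain' compat p) (hmem : ∀ f ∈ p, f.t ≤ e.t) (hlen : 0 < e.len) :
    ∀ q r, p = q ++ e :: r → r = [] := by
  intro q r hpe
  rcases r with _ | ⟨g, r'⟩
  · rfl
  · exfalso
    rw [hpe] at hchain
    have h1 : List.Chain' compat (e :: g :: r') := (List.isChain_append.mp hchain).2.1
    have h2 : compat e g := (List.isChain_cons_cons.mp h1).1
    have h3 : g.t ≤ e.t := hmem g (by simp [hpe])
    have := h2.2
    linarith

private lemma endT_concat (p : List (TEdge V)) (f : TEdge V) :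
    endT (p ++ [f]) = f.t + f.len := by
  unfold endT; rw [List.getLast?_concat]; rfl

private lemma endT_eq_of_getLast {p : List (TEdge V)} {f : TEdge V}
    (h : p.getLast? = some f) : endT p = f.t + f.len := by
  unfold endT; rw [h]; rfl

private lemma mtldp_nil (fin : V → EReal) (tα : ℝ) (u : V) :
    mtldpTime {e | e ∈ ([] : List (TEdge V))} fin tα u = fin u := by
  unfold mtldpTime
  apply le_antisymm
  · apply sSup_le
    rintro s (rfl | ⟨p, v, hp, -, -, rfl⟩)
    · exact le_rfl
    · exfalso
      rcases p with _ | ⟨g, p'⟩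
      · exact hp.1 rfl
      · simpa using hp.2.1 g (by simp)
  · exact le_sSup (Or.inl rfl)

private lemma step_key (e : TEdge V) (T : Set (TEdge V)) (tα : ℝ) (hlen : 0 < e.len)
    (hmax : ∀ f ∈ T, f.t ≤ e.t) (fin : V → EReal) (u : V) :
    mtldpTime (insert e T) fin tα u = mtldpTime T (stepLD tα fin e) tα u := by
  have hmax' : ∀ f ∈ insert e T, f.t ≤ e.t := by
    rintro f (rfl | hf)
    · exact le_rfl
    · exact hmax f hf
  have hle : ∀ v, fin v ≤ stepLD tα fin e v := by
    intro v; unfold stepLD; split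
    · exact le_max_left _ _
    · exact le_rfl
  unfold mtldpTime
  apply le_antisymm
  · apply sSup_le
    rintro s (rfl | ⟨p, v, hp, htα, hend, rfl⟩)
    · exact le_trans (hle u) (le_sSup (Or.inl rfl))
    · obtain ⟨hne, hE, hhead, hlast, hchain⟩ := hp
      rcases List.eq_nil_or_concat p with rfl | ⟨p', f, rfl⟩
      · exact absurd rfl hne
      rw [List.concat_eq_append] at *
      have hmemt : ∀ g ∈ p' ++ [f], g.t ≤ e.t := fun g hg => hmax' g (hE g hg)
      have hlastf : (p' ++ [f]).getLast? = some f := List.getLast?_concat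
      rw [hlastf] at hlast
      have hfv : f.dst = v := by simpa using hlast
      have henp' : e ∉ p' := by
        intro hmem
        obtain ⟨a, b, hab⟩ := List.append_of_mem hmem
        have : b ++ [f] = [] := no_middle hchain hmemt hlen a (b ++ [f]) (by rw [hab]; simp)
        simpa using this
      by_cases hf : f = e
      · subst hf
        subst hfv
        have hendp : endT (p' ++ [f]) = f.t + f.len := endT_concat _ _
        rw [hendp] at hend
        have htf : tα ≤ f.t := htα f (by simp)
        have hcond : f.src = f.src ∧ tα ≤ f.t ∧ ((f.t + f.len : ℝ) : EReal) ≤ fin f.dst :=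
          ⟨rfl, htf, hend⟩
        have hfin' : stepLD tα fin f f.src = max (fin f.src) ((f.t : ℝ) : EReal) := by
          unfold stepLD; rw [if_pos hcond]
        rcases p' with _ | ⟨g, p''⟩
        · -- p = [f], u = f.src
          have hu : f.src = u := by simpa using hhead
          have hst : startT ([] ++ [f]) = f.t := rfl
          rw [hst]
          refine le_trans ?_ (le_sSup (Or.inl rfl))
          rw [hu] at hfin'
          rw [hfin']
          exact le_max_right _ _
        · -- p = (g :: p'') ++ [f], use prefix
          have hhead' : (g :: p'').head?.map TEdge.src = some u := by
            simpa using hhead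
          obtain ⟨hc1, -, hc3⟩ := List.isChain_append.mp hchain
          obtain ⟨lst, hlst⟩ := Option.isSome_iff_exists.mp
            (List.getLast?_isSome.mpr (by simp : (g :: p'') ≠ []))
          have hcomp : compat lst f := hc3 lst hlst f rfl
          have hTmem : ∀ x ∈ (g :: p''), x ∈ T := by
            intro x hx
            rcases hE x (List.mem_append_left _ hx) with rfl | hxT
            · exact absurd hx henp'
            · exact hxT
          have hstart : startT ((g :: p'') ++ [f]) = startT (g :: p'') := rfl
          rw [hstart]
          apply le_sSup
          refine Or.inr ⟨g :: p'', f.src, ⟨by simp, hTmem, hhead', ?_, hc1⟩,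
            fun x hx => htα x (List.mem_append_left _ hx), ?_, rfl⟩
          · rw [hlst]; simp [hcomp.1]
          · rw [endT_eq_of_getLast hlst, hfin']
            refine le_trans ?_ (le_max_right _ _)
            exact EReal.coe_le_coe_iff.mpr hcomp.2
      · -- f ≠ e : whole path lies in T
        have hTmem : ∀ x ∈ p' ++ [f], x ∈ T := by
          intro x hx
          rcases hE x hx with rfl | hxT
          · rcases List.mem_append.mp hx with h | h
            · exact absurd h henp'
            · exact absurd (List.mem_singleton.mp h).symm hf
          · exact hxT
        apply le_sSup
        exact Or.inr ⟨p' ++ [f], v, ⟨hne, hTmem, hhead, by rw [hlastf]; simpa using hfv, hchain⟩,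
          htα, le_trans hend (hle v), rfl⟩
  · apply sSup_le
    rintro s (rfl | ⟨p, v, hp, htα, hend, rfl⟩)
    · -- s = stepLD tα fin e u
      by_cases hcond : u = e.src ∧ tα ≤ e.t ∧ ((e.t + e.len : ℝ) : EReal) ≤ fin e.dst
      · have : stepLD tα fin e u = max (fin u) ((e.t : ℝ) : EReal) := by
          unfold stepLD; rw [if_pos hcond]
        rw [this]
        apply max_le
        · exact le_sSup (Or.inl rfl)
        · apply le_sSup
          refine Or.inr ⟨[e], e.dst, ⟨by simp, by simp, ?_, by simp, List.isChain_singleton _⟩,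
            by simpa using hcond.2.1, ?_, rfl⟩
          · simp [hcond.1]
          · show ((endT [e] : ℝ) : EReal) ≤ fin e.dst
            have : endT [e] = e.t + e.len := rfl
            rw [this]; exact hcond.2.2
      · have : stepLD tα fin e u = fin u := by
          unfold stepLD; rw [if_neg hcond]
        rw [this]
        exact le_sSup (Or.inl rfl)
    · obtain ⟨hne, hE, hhead, hlast, hchain⟩ := hp
      have hp' : IsPath (insert e T) u v p :=
        ⟨hne, fun x hx => Set.mem_insert_of_mem _ (hE x hx), hhead, hlast, hchain⟩
      by_cases hcond : v = e.src ∧ tα ≤ e.t ∧ ((e.t + e.len : ℝ) : EReal) ≤ fin e.dst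
      · have hfv : stepLD tα fin e v = max (fin v) ((e.t : ℝ) : EReal) := by
          unfold stepLD; rw [if_pos hcond]
        rw [hfv] at hend
        rcases le_max_iff.mp hend with h | h
        · exact le_sSup (Or.inr ⟨p, v, hp', htα, h, rfl⟩)
        · -- extend the path by e
          have hendle : endT p ≤ e.t := EReal.coe_le_coe_iff.mp h
          obtain ⟨lst, hlst⟩ := Option.isSome_iff_exists.mp (List.getLast?_isSome.mpr hne)
          have hlstd : lst.dst = v := by rw [hlst] at hlast; simpa using hlast
          have hcomp : compat lst e := by
            refine ⟨by rw [hlstd, hcond.1], ?_⟩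
            rw [← endT_eq_of_getLast hlst]; exact hendle
          have hchain2 : List.Chain' compat (p ++ [e]) := by
            refine List.isChain_append.mpr ?_
            refine ⟨hchain, by simp, ?_⟩
            intro x hx y hy
            rw [hlst] at hx
            simp only [List.head?_cons, Option.mem_def, Option.some.injEq] at hx hy
            rw [← hx, ← hy] at *
            exact hcomp
          have hheadq : (p ++ [e]).head?.map TEdge.src = some u := by
            rcases p with _ | ⟨g, p''⟩
            · exact absurd rfl hne
            · simpa using hhead
          apply le_sSup
          refine Or.inr ⟨p ++ [e], e.dst, ⟨by simp, ?_, hheadq,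
            by rw [List.getLast?_concat]; rfl, hchain2⟩, ?_, ?_, ?_⟩
          · intro x hx
            rcases List.mem_append.mp hx with h' | h'
            · exact Set.mem_insert_of_mem _ (hE x h')
            · rw [List.mem_singleton.mp h']; exact Set.mem_insert _ _
          · intro x hx
            rcases List.mem_append.mp hx with h' | h'
            · exact htα x h'
            · rw [List.mem_singleton.mp h']; exact hcond.2.1
          · rw [endT_concat]; exact hcond.2.2
          · have : startT (p ++ [e]) = startT p := by
              rcases p with _ | ⟨g, p''⟩
              · exact absurd rfl hne
              · rfl
            rw [this]
      · have hfv : stepLD tα fin e v = fin v := by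
          unfold stepLD; rw [if_neg hcond]
        rw [hfv] at hend
        exact le_sSup (Or.inr ⟨p, v, hp', htα, hend, rfl⟩)

private lemma main_aux (l : List (TEdge V)) (tα : ℝ)
    (hsort : l.Pairwise (fun e f => f.t ≤ e.t))
    (hpos : ∀ e ∈ l, 0 < e.len) :
    ∀ fin : V → EReal, ∀ u, (l.foldl (stepLD tα) fin) u = mtldpTime {e | e ∈ l} fin tα u := by
  induction l with
  | nil => intro fin u; simpa using (mtldp_nil fin tα u).symm
  | cons e l ih =>
    intro fin u
    obtain ⟨hmax, hsort'⟩ := List.pairwise_cons.mp hsort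
    have hset : {f | f ∈ e :: l} = insert e {f | f ∈ l} := by
      ext x; simp [List.mem_cons]
    rw [hset, step_key e {f | f ∈ l} tα (hpos e (by simp)) (fun f hf => hmax f hf) fin u]
    exact ih hsort' (fun f hf => hpos f (by simp [hf])) (stepLD tα fin e) u

theorem stmt12 (l : List (TEdge V)) (tα tω : ℝ)
    (hsort : l.Pairwise (fun e f => f.t ≤ e.t))
    (hpos : ∀ e ∈ l, 0 < e.len)
    (fin : V → EReal)
    (hfin : ∀ v, fin v = ⊥ ∨ ((tα : EReal) ≤ fin v ∧ fin v ≤ (tω : EReal))) :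
    ∀ u, (l.foldl (stepLD tα) fin) u = mtldpTime {e | e ∈ l} fin tα u :=
  main_aux l tα hsort hpos fin
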